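/- Let n ≥ 2 and 1 ≤ k ≤ n-1. For 1 ≤ p ≤ n-1 let w_p ∈ S_n send p to n and each q with p < q ≤ n to q-1, and let w_n = 1. Then the set {w ∈ S_n : w⁻¹(i) < w⁻¹(i+1) for all 1 ≤ i ≤ n-2, and w(i) < w(i+1) for all k ≤ i ≤ n-1} equals {w_p : 1 ≤ p < k} ∪ {1}. -/

import Mathlib

/-- For `n ≥ 2`, `1 ≤ k ≤ n-1`, the set of `w ∈ S_n` with
`w⁻¹(i) < w⁻¹(i+1)` for `1 ≤ i ≤ n-2` and `w(i) < w(i+1)` for `k ≤ i ≤ n-1`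
(1-based; formalized 0-based on `Fin n`) equals `{w_p : 1 ≤ p < k} ∪ {1}`, where
`w_p` sends `p ↦ n` and `q ↦ q-1` for `p < q ≤ n`, and `w_n = 1` corresponds to the
0-based parameter `p = n-1`. -/
theorem stmt_2 (n k : ℕ) (hn : 2 ≤ n) (hk1 : 1 ≤ k) (hk2 : k ≤ n - 1) :
    {w : Equiv.Perm (Fin n) |
        (∀ i : Fin n, ∀ h : (i : ℕ) + 1 ≤ n - 2, w⁻¹ i < w⁻¹ ⟨(i : ℕ) + 1, by omega⟩)
        ∧ (∀ i : Fin n, ∀ h : (i : ℕ) + 1 ≤ n - 1, k - 1 ≤ (i : ℕ) →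
            w i < w ⟨(i : ℕ) + 1, by omega⟩)}
      = {w : Equiv.Perm (Fin n) | ∃ p : Fin n, ((p : ℕ) + 1 < k ∨ (p : ℕ) = n - 1) ∧
          ∀ a : Fin n, ((w a : ℕ) =
            if a = p then n - 1 else if (p : ℕ) < (a : ℕ) then (a : ℕ) - 1 else (a : ℕ))} := by
  ext w
  simp only [Set.mem_setOf_eq]
  constructor
  · rintro ⟨hA, hB⟩
    set p : Fin n := w⁻¹ ⟨n - 1, by omega⟩ with hp
    set g : ℕ → ℕ := fun j => if h : j < n then ((w⁻¹ ⟨j, h⟩ : Fin n) : ℕ) else 0 with hg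
    have hadj : ∀ j, j + 1 ≤ n - 2 → g j < g (j + 1) := by
      intro j hj
      have h1 : j < n := by omega
      have h2 : j + 1 < n := by omega
      have h3 := hA ⟨j, h1⟩ (by simpa using hj)
      simp only [hg, dif_pos h1, dif_pos h2]
      exact h3
    have hchain : ∀ d i, i + d ≤ n - 2 → g i + d ≤ g (i + d) := by
      intro d
      induction d with
      | zero => intro i _; simp
      | succ d ih =>
        intro i h
        have h1 := ih i (by omega)
        have h2 := hadj (i + d) (by omega)
        show g i + (d + 1) ≤ g (i + d + 1)
        omega
    have glt : ∀ j, ∀ h : j < n, g j < n := by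
      intro j hj
      simp only [hg, dif_pos hj]
      exact (w⁻¹ ⟨j, hj⟩).isLt
    have glb : ∀ i, i ≤ n - 2 → i ≤ g i := by
      intro i hi
      have := hchain i 0 (by omega)
      simp only [Nat.zero_add] at this
      omega
    have gub : ∀ i, i ≤ n - 2 → g i ≤ i + 1 := by
      intro i hi
      have h1 := hchain (n - 2 - i) i (by omega)
      have h2 : i + (n - 2 - i) = n - 2 := by omega
      rw [h2] at h1
      have h3 := glt (n - 2) (by omega)
      omega
    have gne : ∀ i, i ≤ n - 2 → g i ≠ (p : ℕ) := by
      intro i hi hEq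
      have h1 : i < n := by omega
      have h2 : w⁻¹ ⟨i, h1⟩ = p := by
        apply Fin.ext
        simpa [hg, dif_pos h1] using hEq
      rw [hp] at h2
      have h3 := (Equiv.injective _) h2
      have h4 : i = n - 1 := congrArg Fin.val h3
      omega
    have hplt : (p : ℕ) < n := p.isLt
    have claim : ∀ j, j ≤ n - 2 → g j = if j < (p : ℕ) then j else j + 1 := by
      intro j hj
      have hlb := glb j hj
      have hub := gub j hj
      have hne := gne j hj
      by_cases hc : j < (p : ℕ)
      · rw [if_pos hc]
        by_contra hne2
        have hgj : g j = j + 1 := by omega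
        have h1 := hchain ((p : ℕ) - 1 - j) j (by omega)
        have h2 : j + ((p : ℕ) - 1 - j) = (p : ℕ) - 1 := by omega
        rw [h2] at h1
        have h3 := gub ((p : ℕ) - 1) (by omega)
        have h4 := gne ((p : ℕ) - 1) (by omega)
        omega
      · rw [if_neg hc]
        by_contra hne2
        have hgj : g j = j := by omega
        have h1 := hchain (j - (p : ℕ)) (p : ℕ) (by omega)
        have h2 : (p : ℕ) + (j - (p : ℕ)) = j := by omega
        rw [h2] at h1
        have h3 := glb (p : ℕ) (by omega)
        have h4 := gne (p : ℕ) (by omega)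
        omega
    have wval : ∀ a : Fin n, (w a : ℕ) =
        if a = p then n - 1 else if (p : ℕ) < (a : ℕ) then (a : ℕ) - 1 else (a : ℕ) := by
      intro a
      by_cases hap : a = p
      · rw [if_pos hap, hap, hp]
        simp
      · rw [if_neg hap]
        have hav : (a : ℕ) ≠ (p : ℕ) := fun h => hap (Fin.ext h)
        by_cases hlt : (p : ℕ) < (a : ℕ)
        · rw [if_pos hlt]
          have ha1 : (a : ℕ) - 1 ≤ n - 2 := by have := a.isLt; omega
          have hcl := claim ((a : ℕ) - 1) ha1
          rw [if_neg (by omega)] at hcl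
          have h1 : (a : ℕ) - 1 < n := by omega
          simp only [hg, dif_pos h1] at hcl
          have h2 : w⁻¹ ⟨(a : ℕ) - 1, h1⟩ = a := by
            apply Fin.ext
            simp only [hcl]
            omega
          have h3 := congrArg w h2
          rw [Equiv.Perm.coe_inv, Equiv.apply_symm_apply] at h3
          rw [← h3]
        · rw [if_neg hlt]
          have hav2 : (a : ℕ) < (p : ℕ) := by omega
          have ha1 : (a : ℕ) ≤ n - 2 := by omega
          have hcl := claim (a : ℕ) ha1
          rw [if_pos hav2] at hcl
          have h1 : (a : ℕ) < n := a.isLt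
          simp only [hg, dif_pos h1] at hcl
          have h2 : w⁻¹ ⟨(a : ℕ), h1⟩ = a := by
            apply Fin.ext
            simp only [hcl]
          have h3 := congrArg w h2
          rw [Equiv.Perm.coe_inv, Equiv.apply_symm_apply] at h3
          rw [← h3]
    clear hp hg hadj hchain glt glb gub gne claim
    clear_value p g
    have wvaln : ∀ a : Fin n, (w a : ℕ) =
        if (a : ℕ) = (p : ℕ) then n - 1 else if (p : ℕ) < (a : ℕ) then (a : ℕ) - 1
          else (a : ℕ) := by
      intro a
      rw [wval a]
      simp only [Fin.ext_iff]
    have hpcond : (p : ℕ) + 1 < k ∨ (p : ℕ) = n - 1 := by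
      by_contra hcon
      push_neg at hcon
      obtain ⟨h1, h2⟩ := hcon
      have hple : (p : ℕ) ≤ n - 2 := by omega
      have hB' := hB p (by omega) (by omega)
      rw [Fin.lt_def] at hB'
      have v1 := wvaln p
      have v2 := wvaln ⟨(p : ℕ) + 1, by omega⟩
      simp only [Fin.val_mk] at v2
      split_ifs at v1 v2 <;> omega
    exact ⟨p, hpcond, wval⟩
  · rintro ⟨p, hpcond, hw⟩
    have hplt : (p : ℕ) < n := p.isLt
    have hw' : ∀ a : Fin n, (w a : ℕ) =
        if (a : ℕ) = (p : ℕ) then n - 1 else if (p : ℕ) < (a : ℕ) then (a : ℕ) - 1 else (a : ℕ) := by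
      intro a
      rw [hw a]
      simp only [Fin.ext_iff]
    have winv : ∀ j : Fin n, (j : ℕ) ≤ n - 2 →
        ((w⁻¹ j : Fin n) : ℕ) = if (j : ℕ) < (p : ℕ) then (j : ℕ) else (j : ℕ) + 1 := by
      intro j hj
      by_cases hc : (j : ℕ) < (p : ℕ)
      · rw [if_pos hc]
        have h1 := hw' j
        rw [if_neg (by omega), if_neg (by omega)] at h1
        have h2 : w j = j := Fin.ext h1
        have h3 := congrArg (fun x => w⁻¹ x) h2
        simp only [Equiv.Perm.coe_inv, Equiv.symm_apply_apply] at h3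
        exact congrArg Fin.val h3.symm
      · rw [if_neg hc]
        have h1 := hw' ⟨(j : ℕ) + 1, by omega⟩
        rw [if_neg (by simp only [Fin.val_mk]; omega),
            if_pos (by simp only [Fin.val_mk]; omega)] at h1
        simp only [Fin.val_mk] at h1
        have h2 : w ⟨(j : ℕ) + 1, by omega⟩ = j := by
          apply Fin.ext
          rw [h1]
          omega
        have h3 := congrArg (fun x => w⁻¹ x) h2
        simp only [Equiv.Perm.coe_inv, Equiv.symm_apply_apply] at h3
        exact (congrArg Fin.val h3).symm
    constructor
    · intro i hi
      rw [Fin.lt_def]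
      generalize_proofs pf
      have v1 := winv i (by omega)
      have v2 := winv ⟨(i : ℕ) + 1, pf⟩
        (show ((⟨(i : ℕ) + 1, pf⟩ : Fin n) : ℕ) ≤ n - 2 by
          simp only [Fin.val_mk]; omega)
      simp only [Fin.val_mk] at v2
      split_ifs at v1 v2 <;> omega
    · intro i hi hki
      rw [Fin.lt_def]
      generalize_proofs pf
      have v1 := hw' i
      have v2 := hw' ⟨(i : ℕ) + 1, pf⟩
      simp only [Fin.val_mk] at v2
      have hin : (i : ℕ) < n := i.isLt
      split_ifs at v1 v2 <;> omega
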